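/- Let λ > 0 and let u_1, …, u_N be any points in ℝ³ of the form u_n = (0, y_n, z_n). Then the N × N real symmetric matrix R with entries [R]_{n,m} = sinc(2‖u_n − u_m‖/λ) is positive semidefinite; that is, for every vector c ∈ ℂ^N, Σ_{n=1}^{N} Σ_{m=1}^{N} conj(c_n) c_m sinc(2‖u_n − u_m‖/λ) ≥ 0 (the sum is real and nonnegative). -/

import Mathlib

open Real Finset
open scoped ComplexOrder

/-- The normalized sinc function: `sinc x = sin(π x)/(π x)` for `x ≠ 0`, `sinc 0 = 1`. -/
noncomputable def sinc (x : ℝ) : ℝ :=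
  if x = 0 then 1 else Real.sin (Real.pi * x) / (Real.pi * x)

open MeasureTheory
open scoped RealInnerProductSpace

set_option maxHeartbeats 1000000

lemma hasDeriv_asin {c : ℝ} (hc : 0 < c) {v : ℝ} (hv : v ∈ Set.Ioo (-c) c) :
    HasDerivAt (fun x => Real.arcsin (x / c)) ((Real.sqrt (c^2 - v^2))⁻¹) v := by
  obtain ⟨h1, h2⟩ := hv
  have hne : c ≠ 0 := hc.ne'
  have hd1 : v / c ≠ -1 := by
    intro h; apply absurd h1; rw [not_lt]
    have : v = -c := by field_simp at h; linarith
    simp [this]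
  have hd2 : v / c ≠ 1 := by
    intro h; apply absurd h2; rw [not_lt]
    have : v = c := by field_simp at h; exact h
    simp [this]
  have := (Real.hasDerivAt_arcsin hd1 hd2).comp v ((hasDerivAt_id v).div_const c)
  refine HasDerivAt.congr_deriv this ?_
  have hcv : 0 < c^2 - v^2 := by nlinarith
  have h1s : 1 - (v/c)^2 = (c^2 - v^2) / c^2 := by field_simp
  rw [h1s, Real.sqrt_div' _ (sq_nonneg c), Real.sqrt_sq hc.le]
  field_simp

lemma L1 {c : ℝ} (hc : 0 < c) :
    IntegrableOn (fun v : ℝ => (Real.sqrt (c^2 - v^2))⁻¹) (Set.Ioo (-c) c) ∧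
    ∫ v in Set.Ioo (-c) c, (Real.sqrt (c^2 - v^2))⁻¹ = π := by
  have hcont : ContinuousOn (fun x => Real.arcsin (x / c)) (Set.Icc (-c) c) :=
    (Real.continuous_arcsin.comp (continuous_id.div_const c)).continuousOn
  have hderiv := fun v hv => hasDeriv_asin hc (v := v) hv
  have hpos : ∀ v ∈ Set.Ioo (-c) c, (0:ℝ) ≤ (Real.sqrt (c^2 - v^2))⁻¹ := by
    intro v _; positivity
  have hint := intervalIntegral.integrableOn_deriv_of_nonneg hcont hderiv hpos
  have hint' : IntegrableOn (fun v : ℝ => (Real.sqrt (c^2 - v^2))⁻¹) (Set.Ioo (-c) c) :=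
    hint.mono_set Set.Ioo_subset_Ioc_self
  refine ⟨hint', ?_⟩
  have hab : (-c) ≤ c := by linarith
  have := intervalIntegral.integral_eq_sub_of_hasDerivAt_of_le hab hcont hderiv
    ((intervalIntegrable_iff_integrableOn_Ioc_of_le hab).2 hint)
  rw [intervalIntegral.integral_of_le hab, integral_Ioc_eq_integral_Ioo] at this
  rw [this]
  rw [div_self hc.ne', neg_div, div_self hc.ne']
  simp [Real.arcsin_one, Real.arcsin_neg]


noncomputable def densR (p : ℝ × ℝ) : ℝ :=
  if p.1^2 + p.2^2 < 1 then (2*π*Real.sqrt (1 - p.1^2 - p.2^2))⁻¹ else 0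

lemma densR_nonneg (p : ℝ × ℝ) : 0 ≤ densR p := by
  unfold densR; split <;> positivity

lemma measurable_densR : Measurable densR := by
  unfold densR
  refine Measurable.ite ?_ ?_ measurable_const
  · exact measurableSet_lt (by fun_prop) measurable_const
  · fun_prop

lemma mem_cond {u v : ℝ} (hu : u^2 < 1) :
    (u^2 + v^2 < 1) ↔ v ∈ Set.Ioo (-(Real.sqrt (1-u^2))) (Real.sqrt (1-u^2)) := by
  have h1 : (Real.sqrt (1-u^2))^2 = 1 - u^2 := Real.sq_sqrt (by linarith)
  have h2 : 0 < Real.sqrt (1-u^2) := Real.sqrt_pos.2 (by linarith)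
  constructor
  · intro h
    constructor <;> nlinarith
  · rintro ⟨ha, hb⟩
    nlinarith

lemma densR_slice {u : ℝ} (hu : u^2 < 1) (v : ℝ) :
    densR (u, v) = (2*π)⁻¹ *
      (Set.Ioo (-(Real.sqrt (1-u^2))) (Real.sqrt (1-u^2))).indicator
        (fun v => (Real.sqrt ((Real.sqrt (1-u^2))^2 - v^2))⁻¹) v := by
  set c := Real.sqrt (1-u^2) with hc
  have h1 : c^2 = 1 - u^2 := Real.sq_sqrt (by linarith)
  rw [densR]
  simp only [Set.indicator]
  by_cases h : u^2 + v^2 < 1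
  · rw [if_pos h, if_pos ((mem_cond hu).1 h)]
    rw [h1, mul_inv]
  · rw [if_neg h, if_neg (fun hm => h ((mem_cond hu).2 hm))]
    simp

lemma densR_slice_integrable (u : ℝ) : Integrable (fun v => densR (u, v)) := by
  by_cases hu : u^2 < 1
  · have hc : 0 < Real.sqrt (1-u^2) := Real.sqrt_pos.2 (by linarith)
    have h := (L1 hc).1
    have : Integrable ((Set.Ioo (-(Real.sqrt (1-u^2))) (Real.sqrt (1-u^2))).indicator
        (fun v => (Real.sqrt ((Real.sqrt (1-u^2))^2 - v^2))⁻¹)) :=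
      (integrable_indicator_iff measurableSet_Ioo).2 h
    simpa [densR_slice hu] using this.const_mul ((2*π)⁻¹)
  · have : (fun v => densR (u, v)) = (fun _ => (0:ℝ)) := by
      funext v; rw [densR, if_neg (by nlinarith)]
    rw [this]; exact integrable_zero _ _ _
 
lemma densR_slice_integral {u : ℝ} (hu : u^2 < 1) :
    ∫ v, densR (u, v) = 1/2 := by
  have hc : 0 < Real.sqrt (1-u^2) := Real.sqrt_pos.2 (by linarith)
  have h := (L1 hc).2
  have : (fun v => densR (u,v)) = fun v => (2*π)⁻¹ *
      (Set.Ioo (-(Real.sqrt (1-u^2))) (Real.sqrt (1-u^2))).indicator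
        (fun v => (Real.sqrt ((Real.sqrt (1-u^2))^2 - v^2))⁻¹) v := by
    funext v; exact densR_slice hu v
  rw [this, integral_const_mul, integral_indicator measurableSet_Ioo, h]
  field_simp

noncomputable def Fr (r : ℝ) (p : ℝ × ℝ) : ℂ :=
  (densR p : ℂ) * Complex.exp ((p.1 * r : ℝ) * Complex.I)

lemma Fr_meas (r : ℝ) : AEStronglyMeasurable (Fr r) volume := by
  apply Measurable.aestronglyMeasurable
  apply Measurable.mul
  · exact Complex.measurable_ofReal.comp measurable_densR
  · exact (Complex.continuous_exp.comp (by fun_prop)).measurable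

lemma Fr_norm (r : ℝ) (p : ℝ × ℝ) : ‖Fr r p‖ = densR p := by
  rw [Fr, norm_mul, Complex.norm_exp_ofReal_mul_I, mul_one,
    Complex.norm_real, Real.norm_of_nonneg (densR_nonneg p)]

lemma Fr_slice_integrable (r : ℝ) (u : ℝ) : Integrable (fun v => Fr r (u, v)) := by
  have : (fun v => Fr r (u, v)) =
      fun v => ((densR (u,v) : ℝ) : ℂ) * Complex.exp ((u * r : ℝ) * Complex.I) := rfl
  rw [this]
  exact ((densR_slice_integrable u).ofReal (𝕜 := ℂ)).mul_const _

lemma Fr_integrable (r : ℝ) : Integrable (Fr r) := by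
  have hm := Fr_meas r
  rw [Measure.volume_eq_prod] at hm ⊢
  rw [integrable_prod_iff hm]
  refine ⟨Filter.Eventually.of_forall (Fr_slice_integrable r), ?_⟩
  have heq : (fun u => ∫ v, ‖Fr r (u, v)‖) =
      (Set.Ioo (-1:ℝ) 1).indicator (fun _ => 1/2) := by
    funext u
    simp only [Fr_norm]
    by_cases hu : u^2 < 1
    · rw [densR_slice_integral hu, Set.indicator_of_mem]
      constructor <;> nlinarith
    · have h0 : (fun v => densR (u,v)) = (fun _ => (0:ℝ)) := by
        funext v; rw [densR, if_neg (by nlinarith)]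
      rw [h0, Set.indicator_of_notMem]
      · simp
      · intro hm; exact hu (by obtain ⟨a,b⟩ := hm; nlinarith)
  rw [heq]
  exact (integrable_indicator_iff measurableSet_Ioo).2
    (integrableOn_const measure_Ioo_lt_top.ne)

lemma Fr_inner_integral (r u : ℝ) :
    ∫ v, Fr r (u, v) = (Set.Ioo (-1:ℝ) 1).indicator
      (fun u => (1/2 : ℂ) * Complex.exp ((u * r : ℝ) * Complex.I)) u := by
  have : (fun v => Fr r (u, v)) =
      fun v => ((densR (u,v) : ℝ) : ℂ) * Complex.exp ((u * r : ℝ) * Complex.I) := rfl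
  rw [this, integral_mul_const,
    (by exact integral_ofReal : (∫ a, ((densR (u,a) : ℝ) : ℂ)) = ((∫ a, densR (u,a) : ℝ) : ℂ))]
  by_cases hu : u^2 < 1
  · rw [densR_slice_integral hu, Set.indicator_of_mem (by constructor <;> nlinarith)]
    norm_num
  · have h0 : (fun v => densR (u,v)) = (fun _ => (0:ℝ)) := by
      funext v; rw [densR, if_neg (by nlinarith)]
    rw [h0, Set.indicator_of_notMem (fun hm => hu (by obtain ⟨a,b⟩ := hm; nlinarith))]
    simp

lemma Fr_integral (r : ℝ) : ∫ p, Fr r p = ((_root_.sinc (r / π) : ℝ) : ℂ) := by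
  rw [Measure.volume_eq_prod]
  have hint := Fr_integrable r
  rw [Measure.volume_eq_prod] at hint
  rw [integral_prod _ hint]
  simp only [Fr_inner_integral r]
  rw [integral_indicator measurableSet_Ioo]
  rw [← integral_Ioc_eq_integral_Ioo, ← intervalIntegral.integral_of_le (by norm_num : (-1:ℝ) ≤ 1)]
  by_cases hr : r = 0
  · subst hr
    simp [_root_.sinc]
    norm_num
  · have hexp : (fun u : ℝ => (1/2 : ℂ) * Complex.exp ((u * r : ℝ) * Complex.I)) =
        fun u : ℝ => (1/2 : ℂ) * Complex.exp ((r * Complex.I) * u) := by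
      funext u; congr 1; push_cast; ring_nf
    rw [hexp, intervalIntegral.integral_const_mul,
      integral_exp_mul_complex (by simp [Complex.ext_iff, hr] : (r : ℂ) * Complex.I ≠ 0)]
    have hs : _root_.sinc (r / π) = Real.sin r / r := by
      rw [_root_.sinc, if_neg (div_ne_zero hr Real.pi_ne_zero)]
      rw [mul_div_cancel₀ _ Real.pi_ne_zero]
    rw [hs]
    push_cast
    rw [Complex.sin]
    have hI : Complex.I ≠ 0 := Complex.I_ne_zero
    have hrc : (r:ℂ) ≠ 0 := by exact_mod_cast hr
    field_simp
    ring_nf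
    simp [Complex.I_sq]
    ring_nf

-- existence of isometry
lemma exists_iso {E : Type*} [NormedAddCommGroup E] [InnerProductSpace ℝ E]
    [FiniteDimensional ℝ E] {x y : E} (h : ‖x‖ = ‖y‖) :
    ∃ e : E ≃ₗᵢ[ℝ] E, e x = y := by
  by_cases hxy : x + y = 0
  · exact ⟨LinearIsometryEquiv.neg ℝ, by simp [eq_neg_of_add_eq_zero_left hxy]⟩
  · refine ⟨(ℝ ∙ (x + y)).reflection, ?_⟩
    rw [Submodule.reflection_apply, Submodule.starProjection_singleton]
    have hn : ‖x + y‖ ≠ 0 := by simpa using hxy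
    have hinner : ⟪x + y, x⟫ * 2 = ‖x + y‖^2 := by
      rw [← real_inner_self_eq_norm_sq]
      rw [inner_add_add_self, inner_add_left]
      have hx2 : ⟪x, x⟫ = ‖x‖^2 := real_inner_self_eq_norm_sq x
      have hy2 : ⟪y, y⟫ = ‖y‖^2 := real_inner_self_eq_norm_sq y
      rw [real_inner_comm y x] at *
      have h2 : (‖x‖:ℝ)^2 = ‖y‖^2 := by rw [h]
      linarith [hx2, hy2, h2]
    simp only [RCLike.ofReal_real_eq_id, id_eq]
    have hne : (‖x + y‖^2 : ℝ) ≠ 0 := pow_ne_zero 2 hn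
    have this2 : (⟪x + y, x⟫ / (‖x + y‖^2 : ℝ)) = 2⁻¹ := by
      field_simp
      linarith [hinner]
    rw [this2, two_smul]
    module

noncomputable def densE (w : EuclideanSpace ℝ (Fin 2)) : ℝ := densR (w 0, w 1)

lemma densE_norm (w : EuclideanSpace ℝ (Fin 2)) :
    densE w = if ‖w‖ < 1 then (2*π*Real.sqrt (1-‖w‖^2))⁻¹ else 0 := by
  have hsq : ‖w‖^2 = w 0^2 + w 1^2 := by
    rw [EuclideanSpace.norm_eq, Real.sq_sqrt (by positivity)]
    simp [Fin.sum_univ_two, sq_abs]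
  have hiff : (w 0^2 + w 1^2 < 1) ↔ ‖w‖ < 1 := by
    rw [← hsq]
    constructor <;> intro hh <;> nlinarith [norm_nonneg w]
  rw [densE, densR]
  by_cases h : ‖w‖ < 1
  · rw [if_pos (by simpa [hiff] using h), if_pos h]
    have he : (1:ℝ) - (w 0, w 1).1^2 - (w 0, w 1).2^2 = 1 - ‖w‖^2 := by
      show (1:ℝ) - (w 0)^2 - (w 1)^2 = 1 - ‖w‖^2
      linarith [hsq]
    rw [he]
  · rw [if_neg (by simpa [hiff] using h), if_neg h]

noncomputable def GIv (v w : EuclideanSpace ℝ (Fin 2)) : ℂ :=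
  (densE w : ℂ) * Complex.exp ((⟪w, v⟫ : ℝ) * Complex.I)

noncomputable def Phi : EuclideanSpace ℝ (Fin 2) ≃ᵐ ℝ × ℝ :=
  (MeasurableEquiv.toLp 2 (Fin 2 → ℝ)).symm.trans MeasurableEquiv.finTwoArrow

lemma Phi_mp : MeasurePreserving Phi volume volume :=
  (volume_preserving_finTwoArrow ℝ).comp (EuclideanSpace.volume_preserving_symm_measurableEquiv_toLp (Fin 2))

lemma Fr_comp_Phi (r : ℝ) : (Fr r) ∘ Phi = GIv (EuclideanSpace.single 0 r) := by
  funext w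
  show Fr r (w 0, w 1) = GIv (EuclideanSpace.single 0 r) w
  rw [Fr, GIv, densE]
  congr 2
  rw [EuclideanSpace.inner_single_right]
  simp [mul_comm]

lemma GIv_single_integrable (r : ℝ) : Integrable (GIv (EuclideanSpace.single 0 r)) := by
  rw [← Fr_comp_Phi r]
  exact (Phi_mp.integrable_comp_emb Phi.measurableEmbedding).2 (Fr_integrable r)

lemma GIv_single_integral (r : ℝ) :
    ∫ w, GIv (EuclideanSpace.single 0 r) w = ((_root_.sinc (r / π) : ℝ) : ℂ) := by
  rw [← Fr_comp_Phi r]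
  rw [show ((Fr r) ∘ Phi) = fun w => Fr r (Phi w) from rfl]
  rw [Phi_mp.integral_comp' (Fr r)]
  exact Fr_integral r

lemma GIv_comp_iso (v : EuclideanSpace ℝ (Fin 2)) (e : EuclideanSpace ℝ (Fin 2) ≃ₗᵢ[ℝ] EuclideanSpace ℝ (Fin 2))
    (v0 : EuclideanSpace ℝ (Fin 2)) (he : e v0 = v) : (GIv v) ∘ e = GIv v0 := by
  funext w
  show GIv v (e w) = GIv v0 w
  rw [GIv, GIv]
  congr 2
  · rw [densE_norm, densE_norm, e.norm_map]
  · rw [← he, LinearIsometryEquiv.inner_map_map]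

lemma GIv_integrable (v : EuclideanSpace ℝ (Fin 2)) : Integrable (GIv v) := by
  obtain ⟨e, he⟩ := exists_iso (x := EuclideanSpace.single (0 : Fin 2) ‖v‖) (y := v)
    (by rw [EuclideanSpace.norm_single, Real.norm_of_nonneg (norm_nonneg v)])
  have h := GIv_comp_iso v e _ he
  have := (MeasureTheory.integrable_comp e (GIv v)).1 (h ▸ GIv_single_integrable ‖v‖)
  exact this

lemma GIv_integral (v : EuclideanSpace ℝ (Fin 2)) :
    ∫ w, GIv v w = ((_root_.sinc (‖v‖ / π) : ℝ) : ℂ) := by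
  obtain ⟨e, he⟩ := exists_iso (x := EuclideanSpace.single (0 : Fin 2) ‖v‖) (y := v)
    (by rw [EuclideanSpace.norm_single, Real.norm_of_nonneg (norm_nonneg v)])
  have h := GIv_comp_iso v e _ he
  rw [← GIv_single_integral ‖v‖, ← h]
  exact (MeasureTheory.integral_comp e (GIv v)).symm

lemma densE_nonneg (w : EuclideanSpace ℝ (Fin 2)) : 0 ≤ densE w := densR_nonneg _

/-- For any points `u_n = (0, y_n, z_n)` in the `x = 0` plane of `ℝ³`,
the matrix `[R]_{n,m} = sinc(2‖u_n − u_m‖/λ)` is positive semidefinite: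
for every `c ∈ ℂ^N`, `Σ_n Σ_m conj(c_n) c_m sinc(2‖u_n − u_m‖/λ) ≥ 0`
(in the complex order, i.e. the sum is real and nonnegative). -/
theorem stmt_8 (lam : ℝ) (hlam : 0 < lam) (N : ℕ) (y z : Fin N → ℝ)
    (u : Fin N → EuclideanSpace ℝ (Fin 3))
    (hu : ∀ n, u n = (WithLp.equiv 2 (Fin 3 → ℝ)).symm ![0, y n, z n])
    (c : Fin N → ℂ) :
    0 ≤ ∑ n : Fin N, ∑ m : Fin N,
        (starRingEnd ℂ) (c n) * c m * ((_root_.sinc (2 * ‖u n - u m‖ / lam) : ℝ) : ℂ) := by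
  set k : ℝ := 2 * π / lam with hk
  have hkpos : 0 < k := by positivity
  set p : Fin N → EuclideanSpace ℝ (Fin 2) :=
    fun n => (WithLp.equiv 2 (Fin 2 → ℝ)).symm ![y n, z n] with hp
  set q : Fin N → EuclideanSpace ℝ (Fin 2) := fun n => k • p n with hq
  have hup : ∀ n m, ‖u n - u m‖ = ‖p n - p m‖ := by
    intro n m
    rw [hu n, hu m, EuclideanSpace.norm_eq, EuclideanSpace.norm_eq]
    simp only [PiLp.sub_apply, WithLp.equiv_symm_apply, PiLp.toLp_apply, hp]
    rw [Fin.sum_univ_three, Fin.sum_univ_two]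
    simp [Matrix.cons_val_zero, Matrix.cons_val_one]
  have hq_norm : ∀ n m, ‖q n - q m‖ / π = 2 * ‖u n - u m‖ / lam := by
    intro n m
    have : q n - q m = k • (p n - p m) := by rw [hq]; simp [smul_sub]
    rw [this, norm_smul, Real.norm_of_nonneg hkpos.le, hup n m, hk]
    field_simp
  have hker : ∀ n m, ((_root_.sinc (2 * ‖u n - u m‖ / lam) : ℝ) : ℂ) = ∫ w, GIv (q n - q m) w := by
    intro n m
    rw [GIv_integral, hq_norm n m]
  simp_rw [hker]
  have h1 : ∀ n m : Fin N, (starRingEnd ℂ) (c n) * c m * ∫ w, GIv (q n - q m) w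
      = ∫ w, (starRingEnd ℂ) (c n) * c m * GIv (q n - q m) w :=
    fun n m => (integral_const_mul _ _).symm
  simp_rw [h1]
  have h2 : ∀ n : Fin N, ∑ m, ∫ w, (starRingEnd ℂ) (c n) * c m * GIv (q n - q m) w
      = ∫ w, ∑ m, (starRingEnd ℂ) (c n) * c m * GIv (q n - q m) w :=
    fun n => (integral_finset_sum _ (fun m _ => (GIv_integrable _).const_mul _)).symm
  simp_rw [h2]
  rw [← integral_finset_sum _
    (fun n _ => integrable_finset_sum _ (fun m _ => (GIv_integrable _).const_mul _))]
  have hpt : ∀ w : EuclideanSpace ℝ (Fin 2),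
      ∑ n, ∑ m, (starRingEnd ℂ) (c n) * c m * GIv (q n - q m) w
      = (((densE w * Complex.normSq
          (∑ m, c m * Complex.exp (-((⟪w, q m⟫ : ℝ) : ℂ) * Complex.I))) : ℝ) : ℂ) := by
    intro w
    have hGI : ∀ n m : Fin N, GIv (q n - q m) w =
        (densE w : ℂ) * (Complex.exp (((⟪w, q n⟫ : ℝ) : ℂ) * Complex.I) *
          Complex.exp (-((⟪w, q m⟫ : ℝ) : ℂ) * Complex.I)) := by
      intro n m
      rw [GIv, inner_sub_right, ← Complex.exp_add]
      congr 2
      push_cast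
      ring
    simp_rw [hGI]
    set T := ∑ m, c m * Complex.exp (-((⟪w, q m⟫ : ℝ) : ℂ) * Complex.I) with hT
    have hconjT : (∑ n, (starRingEnd ℂ) (c n) *
        Complex.exp (((⟪w, q n⟫ : ℝ) : ℂ) * Complex.I)) = (starRingEnd ℂ) T := by
      rw [hT, map_sum]
      refine Finset.sum_congr rfl fun n _ => ?_
      rw [map_mul]
      congr 1
      rw [← Complex.exp_conj]
      congr 1
      simp [Complex.conj_ofReal]
    calc ∑ n, ∑ m, (starRingEnd ℂ) (c n) * c m *
          ((densE w : ℂ) * (Complex.exp (((⟪w, q n⟫ : ℝ) : ℂ) * Complex.I) *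
            Complex.exp (-((⟪w, q m⟫ : ℝ) : ℂ) * Complex.I)))
        = (densE w : ℂ) * ∑ n, ∑ m,
            ((starRingEnd ℂ) (c n) * Complex.exp (((⟪w, q n⟫ : ℝ) : ℂ) * Complex.I)) *
            (c m * Complex.exp (-((⟪w, q m⟫ : ℝ) : ℂ) * Complex.I)) := by
          rw [Finset.mul_sum]
          refine Finset.sum_congr rfl fun n _ => ?_
          rw [Finset.mul_sum]
          refine Finset.sum_congr rfl fun m _ => ?_
          ring
      _ = (densE w : ℂ) * ((starRingEnd ℂ) T * T) := by
          rw [← Finset.sum_mul_sum, hconjT]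
      _ = (((densE w * Complex.normSq T) : ℝ) : ℂ) := by
          rw [mul_comm ((starRingEnd ℂ) T) T, Complex.mul_conj]
          push_cast
          ring
  simp_rw [hpt]
  rw [(by exact integral_ofReal :
    (∫ w : EuclideanSpace ℝ (Fin 2), (((densE w * Complex.normSq
      (∑ m, c m * Complex.exp (-((⟪w, q m⟫ : ℝ) : ℂ) * Complex.I))) : ℝ) : ℂ))
    = (((∫ w : EuclideanSpace ℝ (Fin 2), densE w * Complex.normSq
      (∑ m, c m * Complex.exp (-((⟪w, q m⟫ : ℝ) : ℂ) * Complex.I))) : ℝ) : ℂ))]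
  exact Complex.zero_le_real.2 (integral_nonneg fun w =>
    mul_nonneg (densE_nonneg w) (Complex.normSq_nonneg _))
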